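/- Let m ≥ 2 be an integer and let α > 2/m be a real number. The quartic polynomial P_{m,α} has exactly one negative real root, i.e., there exists a unique γ < 0 with P_{m,α}(γ) = 0. -/
import Mathlib


/-- The quartic polynomial `P_{m,α}(γ)` from the analysis of the lower solution. -/
noncomputable def Pquartic (m : ℕ) (α : ℝ) (γ : ℝ) : ℝ :=
  ((m : ℝ) + α) ^ 3 * γ ^ 4
    + (-(((m : ℝ) + α) ^ 2 * ((m : ℝ) + α + 1))) * γ ^ 3
    + (((m : ℝ) + α) * (2 * (m : ℝ) + 6 * α - 4 * (m : ℝ) * α - 1)) * γ ^ 2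
    + (4 * (m : ℝ) ^ 2 * α + 4 * α ^ 2 * (m : ℝ) - 4 * α ^ 2 - 5 * α - (m : ℝ) + 1) * γ
    + (-(8 * ((m : ℝ) - 1) * α))

/-- For `m ≥ 2` and `α > 2/m`, the quartic `P_{m,α}` has exactly one negative real root. -/
theorem P_unique_negative_root (m : ℕ) (hm : 2 ≤ m) (α : ℝ) (hα : 2 / (m : ℝ) < α) :
    ∃! γ : ℝ, γ < 0 ∧ Pquartic m α γ = 0 := by
  have hm2 : (2 : ℝ) ≤ (m : ℝ) := by exact_mod_cast hm
  have hm0 : (0 : ℝ) < (m : ℝ) := by linarith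
  have hα0 : 0 < α := lt_trans (by positivity) hα
  have hmα : 2 < (m : ℝ) * α := by
    rw [div_lt_iff₀ hm0] at hα; linarith [hα]
  have ha1 : 0 < 4 * (m : ℝ) ^ 2 * α + 4 * α ^ 2 * (m : ℝ) - 4 * α ^ 2 - 5 * α - (m : ℝ) + 1 := by
    nlinarith [mul_pos hα0 hα0, sq_nonneg ((m:ℝ) - 2), mul_pos hm0 hα0,
      mul_pos (mul_pos hm0 hm0) hα0, mul_lt_mul_of_pos_left hmα hm0,
      mul_pos hα0 (mul_pos hα0 (by linarith : (0:ℝ) < (m:ℝ) - 1))]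
  -- uniqueness core
  have huniq : ∀ x y : ℝ, x < 0 → y < 0 → Pquartic m α x = 0 → Pquartic m α y = 0 → x = y := by
    intro x y hx hy hPx hPy
    by_contra hne
    wlog hxy : x < y generalizing x y
    · exact this y x hy hx hPy hPx (Ne.symm hne) (lt_of_le_of_ne (not_lt.mp hxy) (Ne.symm hne))
    have hx' : x ≠ 0 := ne_of_lt hx
    have hy' : y ≠ 0 := ne_of_lt hy
    have hxy0 : 0 < x * y := mul_pos_of_neg_of_neg hx hy
    have key : Pquartic m α x * y ^ 2 - Pquartic m α y * x ^ 2 =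
        (x - y) * (((m : ℝ) + α) ^ 3 * (x ^ 2 * y ^ 2) * (x + y)
          + (-(((m : ℝ) + α) ^ 2 * ((m : ℝ) + α + 1))) * (x ^ 2 * y ^ 2)
          - (4 * (m : ℝ) ^ 2 * α + 4 * α ^ 2 * (m : ℝ) - 4 * α ^ 2 - 5 * α - (m : ℝ) + 1) * (x * y)
          + (8 * ((m : ℝ) - 1) * α) * (x + y)) := by
      unfold Pquartic; ring
    rw [hPx, hPy] at key
    have hA : 0 < (m : ℝ) + α := by linarith
    have hbr : ((m : ℝ) + α) ^ 3 * (x ^ 2 * y ^ 2) * (x + y)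
          + (-(((m : ℝ) + α) ^ 2 * ((m : ℝ) + α + 1))) * (x ^ 2 * y ^ 2)
          - (4 * (m : ℝ) ^ 2 * α + 4 * α ^ 2 * (m : ℝ) - 4 * α ^ 2 - 5 * α - (m : ℝ) + 1) * (x * y)
          + (8 * ((m : ℝ) - 1) * α) * (x + y) < 0 := by
      have h1 : ((m : ℝ) + α) ^ 3 * (x ^ 2 * y ^ 2) * (x + y) < 0 := by
        apply mul_neg_of_pos_of_neg (by positivity) (by linarith)
      have h2 : (-(((m : ℝ) + α) ^ 2 * ((m : ℝ) + α + 1))) * (x ^ 2 * y ^ 2) < 0 := by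
        apply mul_neg_of_neg_of_pos (by nlinarith [sq_nonneg ((m:ℝ)+α)]) (by positivity)
      have h3 : 0 < (4 * (m : ℝ) ^ 2 * α + 4 * α ^ 2 * (m : ℝ) - 4 * α ^ 2 - 5 * α - (m : ℝ) + 1) * (x * y) :=
        mul_pos ha1 hxy0
      have h4 : (8 * ((m : ℝ) - 1) * α) * (x + y) < 0 := by
        apply mul_neg_of_pos_of_neg (by nlinarith) (by linarith)
      linarith
    linarith [mul_pos_of_neg_of_neg (by linarith : x - y < 0) hbr]
  -- existence via IVT on [-1, 0]
  have hcont : Continuous fun γ : ℝ => Pquartic m α γ := by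
    unfold Pquartic; fun_prop
  have hP0 : Pquartic m α 0 < 0 := by
    unfold Pquartic; simp; nlinarith
  have hPneg1 : 0 < Pquartic m α (-1) := by
    unfold Pquartic
    nlinarith [mul_nonneg (by linarith : (0:ℝ) ≤ (m:ℝ) + α) (sq_nonneg ((m:ℝ) - α)),
      mul_pos hm0 hα0, mul_pos hα0 hα0, sq_nonneg ((m:ℝ) - 2), mul_pos hm0 hm0]
  have hsub : Set.Icc (Pquartic m α 0) (Pquartic m α (-1)) ⊆
      (fun γ : ℝ => Pquartic m α γ) '' Set.Icc (-1) 0 :=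
    intermediate_value_Icc' (by norm_num) hcont.continuousOn
  obtain ⟨γ, hγmem, hγ0⟩ := hsub ⟨le_of_lt hP0, le_of_lt hPneg1⟩
  have hγneg : γ < 0 := by
    rcases lt_or_eq_of_le hγmem.2 with h | h
    · exact h
    · exfalso; rw [h] at hγ0; simp only at hγ0; linarith
  exact ⟨γ, ⟨hγneg, hγ0⟩, fun y hy => huniq y γ hy.1 hγneg hy.2 hγ0⟩
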